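/- arXiv:1912.07037 — 7 statements merged into one kernel-verified Lean document; each statement's English description precedes it below -/
import Mathlib

section
/- Let L > 0 and α, β be real numbers, and let ψ, p : ℝ × [0,L] → ℝ be twice continuously differentiable (jointly in (t,x)). Assume that for every t and all continuously differentiable test functions η, q : [0,L] → ℝ the weak formulation holds: ∫₀ᴸ (1 − 2β p(t,x)) ∂ₜp(t,x) η(x) dx + α ∫₀ᴸ ∂ₓ∂ₜψ(t,x) η'(x) dx = − ∫₀ᴸ ∂ₓψ(t,x) η'(x) dx and ∫₀ᴸ (1 − 2β p(t,x)) ∂ₜψ(t,x) q(x) dx = ∫₀ᴸ (1 − 2β p(t,x)) p(t,x) q(x) dx. Then for every t, the function t ↦ E(ψ(t,·), p(t,·)) = ∫₀ᴸ ½ (∂ₓψ(t,x))² + (½ − (2β/3) p(t,x)) p(t,x)² dx is differentiable with derivative equal to −α ∫₀ᴸ (∂ₓ∂ₜψ(t,x))² dx. -/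
open MeasureTheory intervalIntegral

/-- Partial derivative in time of a function `f : ℝ × ℝ → ℝ`. -/
noncomputable def Dt (f : ℝ × ℝ → ℝ) (u : ℝ × ℝ) : ℝ :=
  deriv (fun s => f (s, u.2)) u.1

/-- Partial derivative in space of a function `f : ℝ × ℝ → ℝ`. -/
noncomputable def Dx (f : ℝ × ℝ → ℝ) (u : ℝ × ℝ) : ℝ :=
  deriv (fun y => f (u.1, y)) u.2

section helpers
variable {E : Type*} [NormedAddCommGroup E] [NormedSpace ℝ E]

lemma hasDerivAt_fst' {f : ℝ × ℝ → E} {t x : ℝ} (hf : DifferentiableAt ℝ f (t, x)) :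
    HasDerivAt (fun s => f (s, x)) (fderiv ℝ f (t, x) (1, 0)) t :=
  hf.hasFDerivAt.comp_hasDerivAt t ((hasDerivAt_id t).prodMk (hasDerivAt_const t x))

lemma hasDerivAt_snd' {f : ℝ × ℝ → E} {t x : ℝ} (hf : DifferentiableAt ℝ f (t, x)) :
    HasDerivAt (fun y => f (t, y)) (fderiv ℝ f (t, x) (0, 1)) x :=
  hf.hasFDerivAt.comp_hasDerivAt x ((hasDerivAt_const x t).prodMk (hasDerivAt_id x))

lemma dt_eq {f : ℝ × ℝ → ℝ} (hf : Differentiable ℝ f) (u : ℝ × ℝ) :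
    Dt f u = fderiv ℝ f u (1, 0) := by
  have := (hasDerivAt_fst' (f := f) (t := u.1) (x := u.2) (hf _)).deriv
  simpa [Dt] using this

lemma dx_eq {f : ℝ × ℝ → ℝ} (hf : Differentiable ℝ f) (u : ℝ × ℝ) :
    Dx f u = fderiv ℝ f u (0, 1) := by
  have := (hasDerivAt_snd' (f := f) (t := u.1) (x := u.2) (hf _)).deriv
  simpa [Dx] using this

lemma fderiv2_diff {f : ℝ × ℝ → ℝ} (hf : ContDiff ℝ 2 f) :
    Differentiable ℝ (fderiv ℝ f) :=
  (hf.fderiv_right (m := 1) (by norm_num)).differentiable one_ne_zero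

lemma symm2 {f : ℝ × ℝ → ℝ} (hf : ContDiff ℝ 2 f) (u : ℝ × ℝ) (v w : ℝ × ℝ) :
    fderiv ℝ (fderiv ℝ f) u v w = fderiv ℝ (fderiv ℝ f) u w v :=
  second_derivative_symmetric
    (fun y => ((hf.differentiable two_ne_zero) y).hasFDerivAt)
    ((fderiv2_diff hf u).hasFDerivAt) v w

/-- derivative in `y` of `y ↦ Dt f (t, y)` -/
lemma hasDerivAt_dt_snd {f : ℝ × ℝ → ℝ} (hf : ContDiff ℝ 2 f) (t x : ℝ) :
    HasDerivAt (fun y => Dt f (t, y)) (fderiv ℝ (fderiv ℝ f) (t, x) (0, 1) (1, 0)) x := by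
  have h1 : HasDerivAt (fun y => fderiv ℝ f (t, y)) (fderiv ℝ (fderiv ℝ f) (t, x) (0, 1)) x :=
    hasDerivAt_snd' ((fderiv2_diff hf) _)
  have h2 := h1.clm_apply (hasDerivAt_const x ((1 : ℝ), (0 : ℝ)))
  have he : (fun y => (fderiv ℝ f (t, y)) ((1 : ℝ), (0 : ℝ))) = fun y => Dt f (t, y) :=
    funext fun y => (dt_eq (hf.differentiable two_ne_zero) (t, y)).symm
  rw [he] at h2
  simpa using h2

lemma dxdt_eq {f : ℝ × ℝ → ℝ} (hf : ContDiff ℝ 2 f) (t x : ℝ) :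
    Dx (Dt f) (t, x) = fderiv ℝ (fderiv ℝ f) (t, x) (0, 1) (1, 0) :=
  (hasDerivAt_dt_snd hf t x).deriv

/-- derivative in `s` of `s ↦ Dx f (s, x)` -/
lemma hasDerivAt_dx_fst {f : ℝ × ℝ → ℝ} (hf : ContDiff ℝ 2 f) (t x : ℝ) :
    HasDerivAt (fun s => Dx f (s, x)) (Dx (Dt f) (t, x)) t := by
  have h1 : HasDerivAt (fun s => fderiv ℝ f (s, x)) (fderiv ℝ (fderiv ℝ f) (t, x) (1, 0)) t :=
    hasDerivAt_fst' ((fderiv2_diff hf) _)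
  have h2 := h1.clm_apply (hasDerivAt_const t ((0 : ℝ), (1 : ℝ)))
  have he : (fun s => (fderiv ℝ f (s, x)) ((0 : ℝ), (1 : ℝ))) = fun s => Dx f (s, x) :=
    funext fun s => (dx_eq (hf.differentiable two_ne_zero) (s, x)).symm
  rw [he] at h2
  rw [dxdt_eq hf t x, symm2 hf (t, x)]
  simpa using h2

lemma hasDerivAt_p_fst {f : ℝ × ℝ → ℝ} (hf : ContDiff ℝ 2 f) (t x : ℝ) :
    HasDerivAt (fun s => f (s, x)) (Dt f (t, x)) t := by
  have := hasDerivAt_fst' (f := f) ((hf.differentiable two_ne_zero) (t, x))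
  rwa [← dt_eq (hf.differentiable two_ne_zero)] at this

lemma cont_dt {f : ℝ × ℝ → ℝ} (hf : ContDiff ℝ 2 f) : Continuous (Dt f) := by
  have he : Dt f = fun u => fderiv ℝ f u (1, 0) :=
    funext (dt_eq (hf.differentiable two_ne_zero))
  rw [he]
  exact (hf.continuous_fderiv two_ne_zero).clm_apply continuous_const

lemma cont_dx {f : ℝ × ℝ → ℝ} (hf : ContDiff ℝ 2 f) : Continuous (Dx f) := by
  have he : Dx f = fun u => fderiv ℝ f u (0, 1) :=
    funext (dx_eq (hf.differentiable two_ne_zero))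
  rw [he]
  exact (hf.continuous_fderiv two_ne_zero).clm_apply continuous_const

lemma cont_dxdt {f : ℝ × ℝ → ℝ} (hf : ContDiff ℝ 2 f) : Continuous (Dx (Dt f)) := by
  have he : Dx (Dt f) = fun u => fderiv ℝ (fderiv ℝ f) u (0, 1) (1, 0) := by
    funext u
    have := dxdt_eq hf u.1 u.2
    simpa using this
  rw [he]
  exact (((hf.fderiv_right (m := 1) (by norm_num)).continuous_fderiv
    one_ne_zero).clm_apply continuous_const).clm_apply continuous_const

end helpers

/-- One-dimensional instance of Lemma 3 of the paper (energy identity for weak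
solutions): if `(ψ, p)` satisfies the weak formulation of the first-order
Westervelt system on `[0, L]`, then
`d/dt E(ψ(t), p(t)) = −α ∫₀ᴸ (∂ₓ∂ₜψ)² dx`. -/
theorem westervelt_energy_identity (L α β : ℝ) (hL : 0 < L)
    (ψ p : ℝ × ℝ → ℝ) (hψ : ContDiff ℝ 2 ψ) (hp : ContDiff ℝ 2 p)
    (hweak1 : ∀ t : ℝ, ∀ η : ℝ → ℝ, ContDiff ℝ 1 η →
      (∫ x in (0 : ℝ)..L, (1 - 2 * β * p (t, x)) * Dt p (t, x) * η x)
          + α * ∫ x in (0 : ℝ)..L, Dx (Dt ψ) (t, x) * deriv η x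
        = - ∫ x in (0 : ℝ)..L, Dx ψ (t, x) * deriv η x)
    (hweak2 : ∀ t : ℝ, ∀ q : ℝ → ℝ, ContDiff ℝ 1 q →
      (∫ x in (0 : ℝ)..L, (1 - 2 * β * p (t, x)) * Dt ψ (t, x) * q x)
        = ∫ x in (0 : ℝ)..L, (1 - 2 * β * p (t, x)) * p (t, x) * q x) :
    ∀ t : ℝ, HasDerivAt (fun s : ℝ => ∫ x in (0 : ℝ)..L,
        (1 / 2) * (Dx ψ (s, x)) ^ 2
          + (1 / 2 - (2 * β / 3) * p (s, x)) * (p (s, x)) ^ 2)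
      (-α * ∫ x in (0 : ℝ)..L, (Dx (Dt ψ) (t, x)) ^ 2) t := by
  intro t
  have hψd := hψ.differentiable two_ne_zero
  have hpd := hp.differentiable two_ne_zero
  set F' : ℝ × ℝ → ℝ := fun u =>
    Dx ψ u * Dx (Dt ψ) u + (1 - 2 * β * p u) * p u * Dt p u with hF'def
  have hF'cont : Continuous F' := ((cont_dx hψ).mul (cont_dxdt hψ)).add
    (((continuous_const.sub (continuous_const.mul hp.continuous)).mul hp.continuous).mul
      (cont_dt hp))
  have hder : ∀ (s x : ℝ), HasDerivAt (fun s => (1/2) * (Dx ψ (s, x))^2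
      + (1/2 - (2*β/3) * p (s, x)) * (p (s, x))^2) (F' (s, x)) s := by
    intro s x
    have hA := hasDerivAt_dx_fst hψ s x
    have hP := hasDerivAt_p_fst hp s x
    have h1 := (hA.pow 2).const_mul (1/2 : ℝ)
    have h2 := ((hasDerivAt_const s (1/2 : ℝ)).sub (hP.const_mul (2*β/3))).mul (hP.pow 2)
    refine (h1.add h2).congr_deriv ?_
    simp only [hF'def, Pi.pow_apply, Pi.sub_apply]
    push_cast
    ring
  have hecont : Continuous (fun u : ℝ × ℝ =>
      (1/2) * (Dx ψ u)^2 + (1/2 - (2*β/3) * p u) * (p u)^2) :=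
    (continuous_const.mul ((cont_dx hψ).pow 2)).add
      ((continuous_const.sub (continuous_const.mul hp.continuous)).mul (hp.continuous.pow 2))
  obtain ⟨C, hC⟩ := ((isCompact_Icc (a := t-1) (b := t+1)).prod
    (isCompact_Icc (a := (0:ℝ)) (b := L))).exists_bound_of_continuousOn hF'cont.continuousOn
  have main := intervalIntegral.hasDerivAt_integral_of_dominated_loc_of_deriv_le
    (𝕜 := ℝ) (μ := volume) (a := 0) (b := L)
    (F := fun s x => (1/2) * (Dx ψ (s, x))^2 + (1/2 - (2*β/3) * p (s, x)) * (p (s, x))^2)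
    (F' := fun s x => F' (s, x)) (x₀ := t) (bound := fun _ => C) (s := Metric.ball t 1)
    (Metric.ball_mem_nhds t one_pos)
    (Filter.Eventually.of_forall fun s =>
      (hecont.comp (Continuous.prodMk_right s)).aestronglyMeasurable)
    ((hecont.comp (Continuous.prodMk_right t)).intervalIntegrable 0 L)
    ((hF'cont.comp (Continuous.prodMk_right t)).aestronglyMeasurable)
    (Filter.Eventually.of_forall (by
      intro x hx s hs
      have hx' : x ∈ Set.Icc (0:ℝ) L := by
        rw [Set.uIoc_of_le hL.le] at hx; exact ⟨hx.1.le, hx.2⟩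
      have hs' : s ∈ Set.Icc (t-1) (t+1) := by
        rw [Real.ball_eq_Ioo] at hs; exact ⟨hs.1.le, hs.2.le⟩
      exact hC (s, x) (Set.mk_mem_prod hs' hx')))
    intervalIntegrable_const
    (Filter.Eventually.of_forall fun x _ s _ => hder s x)
  have hkey : (∫ x in (0:ℝ)..L, F' (t, x))
      = -α * ∫ x in (0:ℝ)..L, (Dx (Dt ψ) (t, x))^2 := by
    have hη : ContDiff ℝ 1 (fun x => Dt ψ (t, x)) := by
      have he : (fun x => Dt ψ (t, x)) = fun x => fderiv ℝ ψ (t, x) ((1:ℝ), (0:ℝ)) :=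
        funext fun x => dt_eq hψd (t, x)
      rw [he]
      exact ((hψ.fderiv_right (m := 1) (by norm_num)).comp
        (contDiff_const.prodMk contDiff_id)).clm_apply contDiff_const
    have hq : ContDiff ℝ 1 (fun x => Dt p (t, x)) := by
      have he : (fun x => Dt p (t, x)) = fun x => fderiv ℝ p (t, x) ((1:ℝ), (0:ℝ)) :=
        funext fun x => dt_eq hpd (t, x)
      rw [he]
      exact ((hp.fderiv_right (m := 1) (by norm_num)).comp
        (contDiff_const.prodMk contDiff_id)).clm_apply contDiff_const
    have hw1 := hweak1 t (fun x => Dt ψ (t, x)) hη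
    have hw2 := hweak2 t (fun x => Dt p (t, x)) hq
    have hde : deriv (fun x => Dt ψ (t, x)) = fun x => Dx (Dt ψ) (t, x) := funext fun x => rfl
    rw [hde] at hw1
    simp only [] at hw1 hw2
    have hc1 : Continuous fun x => Dx ψ (t, x) * Dx (Dt ψ) (t, x) :=
      ((cont_dx hψ).comp (Continuous.prodMk_right t)).mul ((cont_dxdt hψ).comp (Continuous.prodMk_right t))
    have hc2 : Continuous fun x => (1 - 2*β*p (t, x)) * p (t, x) * Dt p (t, x) :=
      (((continuous_const.sub (continuous_const.mul
        (hp.continuous.comp (Continuous.prodMk_right t)))).mul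
        (hp.continuous.comp (Continuous.prodMk_right t)))).mul
        ((cont_dt hp).comp (Continuous.prodMk_right t))
    have e1 : (∫ x in (0:ℝ)..L, F' (t, x))
        = (∫ x in (0:ℝ)..L, Dx ψ (t, x) * Dx (Dt ψ) (t, x))
          + ∫ x in (0:ℝ)..L, (1 - 2*β*p (t, x)) * p (t, x) * Dt p (t, x) := by
      simp only [hF'def]
      exact intervalIntegral.integral_add (hc1.intervalIntegrable 0 L)
        (hc2.intervalIntegrable 0 L)
    have e3 : (∫ x in (0:ℝ)..L, (1 - 2*β*p (t, x)) * Dt p (t, x) * Dt ψ (t, x))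
        = ∫ x in (0:ℝ)..L, (1 - 2*β*p (t, x)) * Dt ψ (t, x) * Dt p (t, x) :=
      intervalIntegral.integral_congr fun x _ => by ring
    have e4 : (∫ x in (0:ℝ)..L, Dx (Dt ψ) (t, x) * Dx (Dt ψ) (t, x))
        = ∫ x in (0:ℝ)..L, (Dx (Dt ψ) (t, x))^2 :=
      intervalIntegral.integral_congr fun x _ => (sq _).symm
    rw [e1]
    rw [e3] at hw1
    rw [e4] at hw1
    linarith [hw1, hw2]
  rw [← hkey]
  exact main.2
end

section
/- Let L > 0 and β be a real number, and let ψ, p : ℝ × [0,L] → ℝ be twice continuously differentiable (jointly in (t,x)). Assume that for every t and all continuously differentiable test functions η, q : [0,L] → ℝ the weak formulation with α = 0 holds: ∫₀ᴸ (1 − 2β p(t,x)) ∂ₜp(t,x) η(x) dx = − ∫₀ᴸ ∂ₓψ(t,x) η'(x) dx and ∫₀ᴸ (1 − 2β p(t,x)) ∂ₜψ(t,x) q(x) dx = ∫₀ᴸ (1 − 2β p(t,x)) p(t,x) q(x) dx. Then the energy is conserved exactly: for all times s, t one has E(ψ(t,·), p(t,·)) = E(ψ(s,·), p(s,·)), where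 E(ψ,p) = ∫₀ᴸ ½ (∂ₓψ)² + (½ − (2β/3) p) p² dx. -/
open MeasureTheory intervalIntegral

section helpers

variable {E : Type*} [NormedAddCommGroup E] [NormedSpace ℝ E]

lemma hasDerivAt_slice_t (f : ℝ × ℝ → E) {u : ℝ × ℝ} (hf : DifferentiableAt ℝ f u) :
    HasDerivAt (fun s => f (s, u.2)) (fderiv ℝ f u (1, 0)) u.1 := by
  have h1 : HasDerivAt (fun s => ((s, u.2) : ℝ × ℝ)) ((1 : ℝ), (0 : ℝ)) u.1 :=
    (hasDerivAt_id u.1).prodMk (hasDerivAt_const _ _)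
  have := hf.hasFDerivAt.comp_hasDerivAt u.1 (by simpa using h1)
  exact this

lemma hasDerivAt_slice_x (f : ℝ × ℝ → E) {u : ℝ × ℝ} (hf : DifferentiableAt ℝ f u) :
    HasDerivAt (fun y => f (u.1, y)) (fderiv ℝ f u (0, 1)) u.2 := by
  have h1 : HasDerivAt (fun y => ((u.1, y) : ℝ × ℝ)) ((0 : ℝ), (1 : ℝ)) u.2 :=
    (hasDerivAt_const _ _).prodMk (hasDerivAt_id u.2)
  have := hf.hasFDerivAt.comp_hasDerivAt u.2 (by simpa using h1)
  exact this

lemma Dt_eq_fderiv {f : ℝ × ℝ → ℝ} {u : ℝ × ℝ} (hf : DifferentiableAt ℝ f u) :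
    Dt f u = fderiv ℝ f u (1, 0) := (hasDerivAt_slice_t f hf).deriv

lemma Dx_eq_fderiv {f : ℝ × ℝ → ℝ} {u : ℝ × ℝ} (hf : DifferentiableAt ℝ f u) :
    Dx f u = fderiv ℝ f u (0, 1) := (hasDerivAt_slice_x f hf).deriv

lemma Dt_contDiff {f : ℝ × ℝ → ℝ} {n : ℕ} (hf : ContDiff ℝ (n + 1) f) :
    ContDiff ℝ n (Dt f) := by
  have heq : Dt f = fun u => fderiv ℝ f u (1, 0) :=
    funext fun u => Dt_eq_fderiv ((hf.differentiable (by simp)) u)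
  rw [heq]
  exact (hf.fderiv_right (by norm_cast)).clm_apply contDiff_const

lemma Dx_contDiff {f : ℝ × ℝ → ℝ} {n : ℕ} (hf : ContDiff ℝ (n + 1) f) :
    ContDiff ℝ n (Dx f) := by
  have heq : Dx f = fun u => fderiv ℝ f u (0, 1) :=
    funext fun u => Dx_eq_fderiv ((hf.differentiable (by simp)) u)
  rw [heq]
  exact (hf.fderiv_right (by norm_cast)).clm_apply contDiff_const

/-- Second partial derivatives commute for C² functions. -/
lemma Dt_Dx_comm {f : ℝ × ℝ → ℝ} (hf : ContDiff ℝ 2 f) (u : ℝ × ℝ) :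
    Dt (Dx f) u = Dx (Dt f) u := by
  have hdiff : Differentiable ℝ f := hf.differentiable two_ne_zero
  have hf1 : ContDiff ℝ 1 (fderiv ℝ f) := hf.fderiv_right (by norm_cast)
  have hd1 : DifferentiableAt ℝ (fderiv ℝ f) u := hf1.differentiable one_ne_zero u
  -- Dx f = fun u => fderiv f u (0,1)
  have hx : Dx f = fun v => fderiv ℝ f v (0, 1) := funext fun v => Dx_eq_fderiv (hdiff v)
  have ht : Dt f = fun v => fderiv ℝ f v (1, 0) := funext fun v => Dt_eq_fderiv (hdiff v)
  have h1 : HasDerivAt (fun s => fderiv ℝ f (s, u.2)) (fderiv ℝ (fderiv ℝ f) u (1, 0)) u.1 :=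
    hasDerivAt_slice_t _ hd1
  have h2 : HasDerivAt (fun y => fderiv ℝ f (u.1, y)) (fderiv ℝ (fderiv ℝ f) u (0, 1)) u.2 :=
    hasDerivAt_slice_x _ hd1
  have e1 : Dt (Dx f) u = fderiv ℝ (fderiv ℝ f) u (1, 0) (0, 1) := by
    rw [hx]
    exact (h1.clm_apply (hasDerivAt_const _ _)).deriv.trans (by simp)
  have e2 : Dx (Dt f) u = fderiv ℝ (fderiv ℝ f) u (0, 1) (1, 0) := by
    rw [ht]
    exact (h2.clm_apply (hasDerivAt_const _ _)).deriv.trans (by simp)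
  rw [e1, e2]
  exact second_derivative_symmetric (fun y => (hdiff y).hasFDerivAt) hd1.hasFDerivAt _ _

/-- Differentiation under the interval integral sign for C¹ integrands. -/
lemma hasDerivAt_intervalIntegral {F : ℝ × ℝ → ℝ} (hF : ContDiff ℝ 1 F) (a b t₀ : ℝ) :
    HasDerivAt (fun t => ∫ x in a..b, F (t, x)) (∫ x in a..b, Dt F (t₀, x)) t₀ := by
  have hFc : Continuous F := hF.continuous
  have hDteq : Dt F = fun u => fderiv ℝ F u (1, 0) :=
    funext fun u => Dt_eq_fderiv (hF.differentiable one_ne_zero u)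
  have hDtc : Continuous (Dt F) := by
    rw [hDteq]; exact (hF.continuous_fderiv one_ne_zero).clm_apply continuous_const
  obtain ⟨C, hC⟩ := (((isCompact_Icc (a := t₀ - 1) (b := t₀ + 1)).prod
    (isCompact_uIcc (a := a) (b := b)))).exists_bound_of_continuousOn hDtc.continuousOn
  have key := intervalIntegral.hasDerivAt_integral_of_dominated_loc_of_deriv_le
    (μ := volume) (a := a) (b := b) (x₀ := t₀)
    (F := fun t x => F (t, x)) (F' := fun t x => Dt F (t, x)) (bound := fun _ => C)
    (s := Metric.ball t₀ 1) (Metric.ball_mem_nhds t₀ one_pos)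
    (Filter.Eventually.of_forall fun t =>
      ((hFc.comp (continuous_const.prodMk continuous_id)).aestronglyMeasurable))
    ((hFc.comp (continuous_const.prodMk continuous_id)).intervalIntegrable a b)
    ((hDtc.comp (continuous_const.prodMk continuous_id)).aestronglyMeasurable)
    (Filter.Eventually.of_forall fun x hx t ht => by
      refine hC (t, x) ⟨?_, Set.uIoc_subset_uIcc hx⟩
      have : |t - t₀| < 1 := by simpa [Real.dist_eq] using ht
      constructor <;> [linarith [abs_le.1 this.le |>.1]; linarith [abs_le.1 this.le |>.2]])
    (intervalIntegrable_const)
    (Filter.Eventually.of_forall fun x _ t _ => by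
      have h := hasDerivAt_slice_t F ((hF.differentiable one_ne_zero) (t, x))
      simpa [hDteq] using h)
  exact key.2

end helpers

/-- Corollary of Lemma 3 of the paper for `α = 0`: weak solutions of the
nondissipative first-order Westervelt system conserve the acoustic energy
`E(ψ,p) = ∫₀ᴸ ½ (∂ₓψ)² + (½ − (2β/3) p) p² dx` exactly for all times. -/
theorem westervelt_energy_conservation (L β : ℝ) (hL : 0 < L)
    (ψ p : ℝ × ℝ → ℝ) (hψ : ContDiff ℝ 2 ψ) (hp : ContDiff ℝ 2 p)
    (hweak1 : ∀ t : ℝ, ∀ η : ℝ → ℝ, ContDiff ℝ 1 η →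
      (∫ x in (0 : ℝ)..L, (1 - 2 * β * p (t, x)) * Dt p (t, x) * η x)
        = - ∫ x in (0 : ℝ)..L, Dx ψ (t, x) * deriv η x)
    (hweak2 : ∀ t : ℝ, ∀ q : ℝ → ℝ, ContDiff ℝ 1 q →
      (∫ x in (0 : ℝ)..L, (1 - 2 * β * p (t, x)) * Dt ψ (t, x) * q x)
        = ∫ x in (0 : ℝ)..L, (1 - 2 * β * p (t, x)) * p (t, x) * q x) :
    ∀ s t : ℝ,
      (∫ x in (0 : ℝ)..L, (1 / 2) * (Dx ψ (t, x)) ^ 2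
          + (1 / 2 - (2 * β / 3) * p (t, x)) * (p (t, x)) ^ 2)
        = ∫ x in (0 : ℝ)..L, (1 / 2) * (Dx ψ (s, x)) ^ 2
          + (1 / 2 - (2 * β / 3) * p (s, x)) * (p (s, x)) ^ 2 := by
  have hψ' : ContDiff ℝ ((1 : ℕ) + 1) ψ := by exact_mod_cast hψ
  have hp' : ContDiff ℝ ((1 : ℕ) + 1) p := by exact_mod_cast hp
  have hDxψ : ContDiff ℝ 1 (Dx ψ) := by exact_mod_cast Dx_contDiff hψ'
  have hDtψ : ContDiff ℝ 1 (Dt ψ) := by exact_mod_cast Dt_contDiff hψ'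
  have hDtp : ContDiff ℝ 1 (Dt p) := by exact_mod_cast Dt_contDiff hp'
  have hp1 : ContDiff ℝ 1 p := hp.of_le one_le_two
  have hDxψ' : ContDiff ℝ ((0 : ℕ) + 1) (Dx ψ) := by exact_mod_cast hDxψ
  have hDtDxψc : Continuous (Dt (Dx ψ)) := by
    have := Dt_contDiff hDxψ'
    exact this.continuous
  -- the integrand
  set F : ℝ × ℝ → ℝ := fun u => (1/2) * (Dx ψ u)^2 + (1/2 - (2*β/3) * p u) * (p u)^2 with hFdef
  have hFc : ContDiff ℝ 1 F := by
    apply ContDiff.add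
    · exact contDiff_const.mul (hDxψ.pow 2)
    · exact (contDiff_const.sub (contDiff_const.mul hp1)).mul (hp1.pow 2)
  -- formula for Dt F
  have hDtF : ∀ u : ℝ × ℝ, Dt F u
      = Dx ψ u * Dt (Dx ψ) u + (1 - 2*β*p u) * (p u) * Dt p u := by
    intro u
    have h1 : HasDerivAt (fun s => Dx ψ (s, u.2)) (Dt (Dx ψ) u) u.1 := by
      have h := hasDerivAt_slice_t (Dx ψ) ((hDxψ.differentiable one_ne_zero) u)
      rwa [← Dt_eq_fderiv ((hDxψ.differentiable one_ne_zero) u)] at h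
    have h2 : HasDerivAt (fun s => p (s, u.2)) (Dt p u) u.1 := by
      have h := hasDerivAt_slice_t p ((hp1.differentiable one_ne_zero) u)
      rwa [← Dt_eq_fderiv ((hp1.differentiable one_ne_zero) u)] at h
    have H : HasDerivAt (fun s => F (s, u.2))
        ((1/2) * (↑2 * Dx ψ u ^ 1 * Dt (Dx ψ) u)
          + ((0 - (2*β/3) * Dt p u) * (p u)^2
            + (1/2 - (2*β/3) * p u) * (↑2 * p u ^ 1 * Dt p u))) u.1 := by
      exact (((h1.pow 2).const_mul (1/2)).add
        ((((hasDerivAt_const u.1 (1/2)).sub (h2.const_mul (2*β/3))).mul (h2.pow 2))))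
    have := H.deriv
    show deriv (fun s => F (s, u.2)) u.1 = _
    rw [this]; push_cast; ring
  -- derivative of the energy
  have hE : ∀ t₀ : ℝ, HasDerivAt (fun t => ∫ x in (0:ℝ)..L, F (t, x))
      (∫ x in (0:ℝ)..L, Dt F (t₀, x)) t₀ :=
    fun t₀ => hasDerivAt_intervalIntegral hFc 0 L t₀
  -- the derivative vanishes
  have hzero : ∀ t₀ : ℝ, (∫ x in (0:ℝ)..L, Dt F (t₀, x)) = 0 := by
    intro t₀
    have hηc : ContDiff ℝ 1 (fun x => Dt ψ (t₀, x)) :=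
      hDtψ.comp (contDiff_const.prodMk contDiff_id)
    have hqc : ContDiff ℝ 1 (fun x => Dt p (t₀, x)) :=
      hDtp.comp (contDiff_const.prodMk contDiff_id)
    have h1 := hweak1 t₀ (fun x => Dt ψ (t₀, x)) hηc
    have h2 := hweak2 t₀ (fun x => Dt p (t₀, x)) hqc
    beta_reduce at h1 h2
    -- continuity of pieces
    have c1 : Continuous fun x : ℝ => Dx ψ (t₀, x) * Dt (Dx ψ) (t₀, x) :=
      ((hDxψ.continuous.comp (continuous_const.prodMk continuous_id)).mul
        (hDtDxψc.comp (continuous_const.prodMk continuous_id)))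
    have c2 : Continuous fun x : ℝ =>
        (1 - 2*β*p (t₀, x)) * (p (t₀, x)) * Dt p (t₀, x) := by
      have hpc : Continuous fun x : ℝ => p (t₀, x) :=
        hp1.continuous.comp (continuous_const.prodMk continuous_id)
      have hdtpc : Continuous fun x : ℝ => Dt p (t₀, x) :=
        hDtp.continuous.comp (continuous_const.prodMk continuous_id)
      exact ((continuous_const.sub (continuous_const.mul hpc)).mul hpc).mul hdtpc
    have hsplit : (∫ x in (0:ℝ)..L, Dt F (t₀, x))
        = (∫ x in (0:ℝ)..L, Dx ψ (t₀, x) * Dt (Dx ψ) (t₀, x))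
          + ∫ x in (0:ℝ)..L, (1 - 2*β*p (t₀, x)) * (p (t₀, x)) * Dt p (t₀, x) := by
      rw [← intervalIntegral.integral_add (c1.intervalIntegrable _ _)
        (c2.intervalIntegrable _ _)]
      exact intervalIntegral.integral_congr fun x _ => hDtF (t₀, x)
    -- rewrite first integral using commutation of partials and h1, h2
    have hcomm : (∫ x in (0:ℝ)..L, Dx ψ (t₀, x) * Dt (Dx ψ) (t₀, x))
        = ∫ x in (0:ℝ)..L, Dx ψ (t₀, x) * deriv (fun x => Dt ψ (t₀, x)) x :=
      intervalIntegral.integral_congr fun x _ => by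
        rw [Dt_Dx_comm hψ]; rfl
    have h2' : (∫ x in (0:ℝ)..L, (1 - 2*β*p (t₀, x)) * (p (t₀, x)) * Dt p (t₀, x))
        = ∫ x in (0:ℝ)..L, (1 - 2 * β * p (t₀, x)) * Dt p (t₀, x) * Dt ψ (t₀, x) := by
      rw [← h2]
      exact intervalIntegral.integral_congr fun x _ => by ring
    rw [hsplit, hcomm, h2', h1]
    ring
  -- conclude: the energy function is constant
  intro s t
  have := is_const_of_deriv_eq_zero (f := fun t => ∫ x in (0:ℝ)..L, F (t, x))
    (fun t₀ => (hE t₀).differentiableAt)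
    (fun t₀ => by rw [(hE t₀).deriv, hzero]) t s
  simpa [hFdef] using this
end

section
/- Let N be a natural number, m ∈ ℝᴺ, K a symmetric N×N real matrix, α, β real numbers, t₀ < t₁ real numbers, and Q ≥ 1 a natural number. Let ψ, p : ℝ → ℝᴺ be functions each of whose components is a polynomial function of degree at most Q. Assume that for every function η : ℝ → ℝᴺ whose components are polynomial functions of degree at most Q−1, ∫_{t₀}^{t₁} [ Σᵢ mᵢ (1 − 2β pᵢ(t)) pᵢ'(t) ηᵢ(t) + α (ψ'(t))ᵀ K η(t) + (ψ(t))ᵀ K η(t) ] dt = 0, and for every function q̃ : ℝ → ℝᴺ whose components are polynomial functions of degree at most Q−1, ∫_{t₀}^{t₁} Σᵢ mᵢ (1 − 2β pᵢ(t)) (ψᵢ'(t) − pᵢ(t)) q̃ᵢ(t) dt = 0. Define E_h(ψ,p) = ½ ψᵀKψ + Σᵢ mᵢ (½ − (2β/3) pᵢ) pᵢ² for ψ, p ∈ ℝᴺ. Then E_h(ψ(t₁), p(t₁)) = E_h(ψ(t₀), p(t₀)) − α ∫_{t₀}^{t₁} (ψ'(t))ᵀ K ψ'(t) dt. -/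
open MeasureTheory intervalIntegral Matrix

/-- The discrete (mass-lumped) energy `E_h(ψ,p) = ½ψᵀKψ + Σᵢ mᵢ(½ − (2β/3)pᵢ)pᵢ²`. -/
noncomputable def Eh {N : ℕ} (m : Fin N → ℝ) (K : Matrix (Fin N) (Fin N) ℝ) (β : ℝ)
    (ψ p : Fin N → ℝ) : ℝ :=
  (1 / 2) * (ψ ⬝ᵥ K.mulVec ψ) + ∑ i, m i * ((1 / 2 - (2 * β / 3) * p i) * (p i) ^ 2)

/-- Coordinate form of Lemma 4 of the paper on a single time interval: the
Galerkin–Petrov-Galerkin time discretization of the Westervelt system, with trial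
functions polynomial of degree ≤ Q in time and test functions polynomial of degree
≤ Q−1 in time, satisfies the discrete energy identity exactly. -/
theorem discrete_energy_identity_polynomial (N : ℕ) (m : Fin N → ℝ)
    (K : Matrix (Fin N) (Fin N) ℝ) (hK : K.IsSymm) (α β : ℝ)
    (t₀ t₁ : ℝ) (ht : t₀ < t₁) (Q : ℕ) (hQ : 1 ≤ Q)
    (ψ p : ℝ → Fin N → ℝ)
    (hψ : ∀ i, ∃ P : Polynomial ℝ, P.natDegree ≤ Q ∧ ∀ t, ψ t i = P.eval t)
    (hp : ∀ i, ∃ P : Polynomial ℝ, P.natDegree ≤ Q ∧ ∀ t, p t i = P.eval t)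
    (hweak1 : ∀ η : ℝ → Fin N → ℝ,
      (∀ i, ∃ P : Polynomial ℝ, P.natDegree ≤ Q - 1 ∧ ∀ t, η t i = P.eval t) →
      (∫ t in t₀..t₁,
        (∑ i, m i * (1 - 2 * β * p t i) * deriv (fun s => p s i) t * η t i)
          + α * ((fun i => deriv (fun s => ψ s i) t) ⬝ᵥ K.mulVec (η t))
          + (ψ t ⬝ᵥ K.mulVec (η t))) = 0)
    (hweak2 : ∀ q : ℝ → Fin N → ℝ,
      (∀ i, ∃ P : Polynomial ℝ, P.natDegree ≤ Q - 1 ∧ ∀ t, q t i = P.eval t) →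
      (∫ t in t₀..t₁,
        ∑ i, m i * (1 - 2 * β * p t i)
          * (deriv (fun s => ψ s i) t - p t i) * q t i) = 0) :
    Eh m K β (ψ t₁) (p t₁)
      = Eh m K β (ψ t₀) (p t₀)
        - α * ∫ t in t₀..t₁,
            (fun i => deriv (fun s => ψ s i) t) ⬝ᵥ
              K.mulVec (fun i => deriv (fun s => ψ s i) t) := by
  classical
  choose Pψ hPψd hPψ using hψ
  choose Pp hPpd hPp using hp
  -- derivative functions
  set dψ : ℝ → Fin N → ℝ := fun t i => Polynomial.eval t (Polynomial.derivative (Pψ i))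
    with hdψdef
  set dp : ℝ → Fin N → ℝ := fun t i => Polynomial.eval t (Polynomial.derivative (Pp i))
    with hdpdef
  have hdψ : ∀ i t, deriv (fun s => ψ s i) t = dψ t i := by
    intro i t
    have h1 : (fun s => ψ s i) = fun s => Polynomial.eval s (Pψ i) :=
      funext fun s => hPψ i s
    rw [h1, Polynomial.deriv]
  have hdp : ∀ i t, deriv (fun s => p s i) t = dp t i := by
    intro i t
    have h1 : (fun s => p s i) = fun s => Polynomial.eval s (Pp i) :=
      funext fun s => hPp i s
    rw [h1, Polynomial.deriv]
  -- continuity facts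
  have hcψ : ∀ i, Continuous fun t => ψ t i := by
    intro i
    have h1 : (fun t => ψ t i) = fun t => Polynomial.eval t (Pψ i) := funext fun s => hPψ i s
    rw [h1]; exact (Pψ i).continuous
  have hcp : ∀ i, Continuous fun t => p t i := by
    intro i
    have h1 : (fun t => p t i) = fun t => Polynomial.eval t (Pp i) := funext fun s => hPp i s
    rw [h1]; exact (Pp i).continuous
  have hcdψ : ∀ i, Continuous fun t => dψ t i := fun i => (Polynomial.continuous _)
  have hcdp : ∀ i, Continuous fun t => dp t i := fun i => (Polynomial.continuous _)
  -- dot products as explicit sums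
  have hdot : ∀ (u v : Fin N → ℝ), u ⬝ᵥ K.mulVec v = ∑ i, u i * ∑ j, K i j * v j := by
    intro u v; rfl
  have hcdot : ∀ (f g : ℝ → Fin N → ℝ), (∀ i, Continuous fun t => f t i) →
      (∀ i, Continuous fun t => g t i) →
      Continuous fun t => f t ⬝ᵥ K.mulVec (g t) := by
    intro f g hf hg
    simp only [hdot]
    exact continuous_finset_sum _ fun i _ => (hf i).mul
      (continuous_finset_sum _ fun j _ => continuous_const.mul (hg j))
  -- symmetry of the bilinear form
  have hsym : ∀ x y : Fin N → ℝ, x ⬝ᵥ K.mulVec y = y ⬝ᵥ K.mulVec x := by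
    intro x y
    rw [Matrix.dotProduct_mulVec]
    conv_lhs => rw [← hK]
    rw [Matrix.vecMul_transpose, dotProduct_comm]
  -- the three integrands
  set G : ℝ → ℝ := fun t => dψ t ⬝ᵥ K.mulVec (dψ t) with hGdef
  set B : ℝ → ℝ := fun t => ∑ i, m i * (1 - 2 * β * p t i) * (dψ t i - p t i) * dp t i
    with hBdef
  set F : ℝ → ℝ := fun t => (ψ t ⬝ᵥ K.mulVec (dψ t))
      + ∑ i, m i * ((1 - 2 * β * p t i) * (p t i * dp t i)) with hFdef
  -- instantiate the weak formulations
  have hdeg : ∀ i, ∃ P : Polynomial ℝ, P.natDegree ≤ Q - 1 ∧ ∀ t, dψ t i = P.eval t := by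
    intro i
    exact ⟨(Pψ i).derivative, le_trans (Polynomial.natDegree_derivative_le _)
      (Nat.sub_le_sub_right (hPψd i) 1), fun t => rfl⟩
  have hdegp : ∀ i, ∃ P : Polynomial ℝ, P.natDegree ≤ Q - 1 ∧ ∀ t, dp t i = P.eval t := by
    intro i
    exact ⟨(Pp i).derivative, le_trans (Polynomial.natDegree_derivative_le _)
      (Nat.sub_le_sub_right (hPpd i) 1), fun t => rfl⟩
  have hA0 := hweak1 dψ hdeg
  have hB0 := hweak2 dp hdegp
  simp only [hdψ, hdp] at hA0
  simp only [hdψ] at hB0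
  -- integrability
  have hIF : IntervalIntegrable F volume t₀ t₁ := by
    apply Continuous.intervalIntegrable
    exact (hcdot ψ dψ hcψ hcdψ).add (continuous_finset_sum _ fun i _ =>
      continuous_const.mul (((continuous_const.sub (continuous_const.mul (hcp i))).mul
        ((hcp i).mul (hcdp i)))))
  have hIB : IntervalIntegrable B volume t₀ t₁ := by
    apply Continuous.intervalIntegrable
    exact continuous_finset_sum _ fun i _ =>
      (((continuous_const.mul (continuous_const.sub (continuous_const.mul (hcp i)))).mul
        ((hcdψ i).sub (hcp i)))).mul (hcdp i)
  have hIG : IntervalIntegrable G volume t₀ t₁ := by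
    apply Continuous.intervalIntegrable
    exact hcdot dψ dψ hcdψ hcdψ
  -- pointwise identity: the integrand of hA0 is F + B + α * G
  have hpt : ∀ t, (∑ i, m i * (1 - 2 * β * p t i) * dp t i * dψ t i)
      + α * (dψ t ⬝ᵥ K.mulVec (dψ t)) + (ψ t ⬝ᵥ K.mulVec (dψ t))
      = F t + B t + α * G t := by
    intro t
    have hsum : (∑ i, m i * ((1 - 2 * β * p t i) * (p t i * dp t i)))
        + (∑ i, m i * (1 - 2 * β * p t i) * (dψ t i - p t i) * dp t i)
        = ∑ i, m i * (1 - 2 * β * p t i) * dp t i * dψ t i := by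
      rw [← Finset.sum_add_distrib]
      exact Finset.sum_congr rfl fun i _ => by ring
    simp only [hFdef, hBdef, hGdef]
    linarith [hsum]
  -- hence ∫ F = - α ∫ G
  have hintF : (∫ t in t₀..t₁, F t) = - (α * ∫ t in t₀..t₁, G t) := by
    have h1 : (∫ t in t₀..t₁, (F t + B t + α * G t)) = 0 := by
      rw [← hA0]
      apply intervalIntegral.integral_congr
      intro t _
      exact (hpt t).symm
    rw [intervalIntegral.integral_add (hIF.add hIB) (hIG.const_mul α),
      intervalIntegral.integral_add hIF hIB, intervalIntegral.integral_const_mul] at h1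
    have h2 : (∫ t in t₀..t₁, B t) = 0 := hB0
    linarith
  -- fundamental theorem of calculus: ∫ F = E(t₁) - E(t₀)
  have hderiv : ∀ t ∈ Set.uIcc t₀ t₁, HasDerivAt (fun t => Eh m K β (ψ t) (p t)) (F t) t := by
    intro t _
    have hfun : (fun t => Eh m K β (ψ t) (p t)) = fun t =>
        (1 / 2) * (∑ i, Polynomial.eval t (Pψ i) * ∑ j, K i j * Polynomial.eval t (Pψ j))
        + ∑ i, m i * ((1 / 2 - (2 * β / 3) * Polynomial.eval t (Pp i))
            * (Polynomial.eval t (Pp i)) ^ 2) := by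
      funext s
      simp only [Eh, hdot, hPψ, hPp]
    rw [hfun]
    have h1 : HasDerivAt (fun t =>
        ∑ i, Polynomial.eval t (Pψ i) * ∑ j, K i j * Polynomial.eval t (Pψ j))
        (∑ i, (dψ t i * ∑ j, K i j * ψ t j + ψ t i * ∑ j, K i j * dψ t j)) t := by
      apply HasDerivAt.fun_sum
      intro i _
      have ha := (Pψ i).hasDerivAt t
      have hb : HasDerivAt (fun t => ∑ j, K i j * Polynomial.eval t (Pψ j))
          (∑ j, K i j * dψ t j) t :=
        HasDerivAt.fun_sum fun j _ => ((Pψ j).hasDerivAt t).const_mul (K i j)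
      have := ha.mul hb
      convert this using 2 <;> (try rfl) <;> simp [hPψ, hdψdef]
    have h2 : HasDerivAt (fun t => ∑ i, m i * ((1 / 2 - (2 * β / 3) * Polynomial.eval t (Pp i))
          * (Polynomial.eval t (Pp i)) ^ 2))
        (∑ i, m i * ((1 - 2 * β * p t i) * (p t i * dp t i))) t := by
      apply HasDerivAt.fun_sum
      intro i _
      have ha : HasDerivAt (fun t => 1 / 2 - (2 * β / 3) * Polynomial.eval t (Pp i))
          (-(2 * β / 3 * dp t i)) t :=
        (((Pp i).hasDerivAt t).const_mul (2 * β / 3)).const_sub (1 / 2)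
      have hb : HasDerivAt (fun t => (Polynomial.eval t (Pp i)) ^ 2)
          ((2 : ℕ) * (Polynomial.eval t (Pp i)) ^ (2 - 1) * dp t i) t :=
        ((Pp i).hasDerivAt t).pow 2
      have := (ha.mul hb).const_mul (m i)
      convert this using 1 <;> try rfl
      simp only [hPp]
      push_cast
      ring
    have := (h1.const_mul (1 / 2)).add h2
    convert this using 1 <;> try rfl
    simp only [hFdef]
    have e1 : (∑ i, (dψ t i * ∑ j, K i j * ψ t j + ψ t i * ∑ j, K i j * dψ t j))
        = dψ t ⬝ᵥ K.mulVec (ψ t) + ψ t ⬝ᵥ K.mulVec (dψ t) := by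
      rw [Finset.sum_add_distrib, hdot, hdot]
    rw [e1, hsym (dψ t) (ψ t)]
    ring
  have hFTC : (∫ t in t₀..t₁, F t)
      = Eh m K β (ψ t₁) (p t₁) - Eh m K β (ψ t₀) (p t₀) :=
    intervalIntegral.integral_eq_sub_of_hasDerivAt hderiv hIF
  -- conclude
  simp only [hdψ]
  have : (∫ t in t₀..t₁, (fun i => dψ t i) ⬝ᵥ K.mulVec fun i => dψ t i)
      = ∫ t in t₀..t₁, G t := rfl
  rw [this]
  linarith
end

section
/- Let N be a natural number, m ∈ ℝᴺ with all entries mᵢ > 0, K a symmetric N×N real matrix, α, β real numbers, τ > 0, and t₀ real. Let ψⁿ, ψⁿ⁺¹, pⁿ, pⁿ⁺¹ ∈ ℝᴺ and let ψ, p : ℝ → ℝᴺ be the affine interpolants ψ(t) = ψⁿ + ((t − t₀)/τ)(ψⁿ⁺¹ − ψⁿ) and p(t) = pⁿ + ((t − t₀)/τ)(pⁿ⁺¹ − pⁿ). Write ψ̄ = (ψⁿ + ψⁿ⁺¹)/2 and p̄ = (pⁿ + pⁿ⁺¹)/2. Then the following are equivalent: (a) for every constant test function η ∈ ℝᴺ,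 ∫_{t₀}^{t₀+τ} [ Σᵢ mᵢ (1 − 2β pᵢ(t)) pᵢ'(t) ηᵢ + α (ψ'(t))ᵀ K η + (ψ(t))ᵀ K η ] dt = 0, and for every constant test function q̃ ∈ ℝᴺ, ∫_{t₀}^{t₀+τ} Σᵢ mᵢ (1 − 2β pᵢ(t)) (ψᵢ'(t) − pᵢ(t)) q̃ᵢ dt = 0; (b) for every index i, mᵢ (1 − 2β p̄ᵢ)(pᵢⁿ⁺¹ − pᵢⁿ)/τ + α (K(ψⁿ⁺¹ − ψⁿ))ᵢ/τ + (Kψ̄)ᵢ = 0, and (1 − 2β p̄ᵢ)(ψᵢⁿ⁺¹ − ψᵢⁿ)/τ = (1 − 2β p̄ᵢ) p̄ᵢ − (β/6)(pᵢⁿ⁺¹ − pᵢⁿ)². -/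
open MeasureTheory intervalIntegral Matrix

private lemma deriv_affine (t₀ τ : ℝ) (hτ : τ ≠ 0) (a c t : ℝ) :
    deriv (fun s => a + ((s - t₀) / τ) * c) t = c / τ := by
  have h : HasDerivAt (fun s => a + ((s - t₀) / τ) * c) (1 / τ * c) t :=
    ((((hasDerivAt_id t).sub_const t₀).div_const τ).mul_const c).const_add a
  rw [h.deriv]; ring

private lemma integral_quad (t₀ τ : ℝ) (hτ : τ ≠ 0) (a b c : ℝ) :
    (∫ t in t₀..(t₀ + τ), (a + ((t - t₀) / τ) * b + ((t - t₀) / τ) ^ 2 * c))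
      = τ * a + τ / 2 * b + τ / 3 * c := by
  have h : ∀ t ∈ Set.uIcc t₀ (t₀ + τ), HasDerivAt
      (fun t => a * t + b / (2 * τ) * (t - t₀) ^ 2 + c / (3 * τ ^ 2) * (t - t₀) ^ 3)
      (a + ((t - t₀) / τ) * b + ((t - t₀) / τ) ^ 2 * c) t := by
    intro t _
    have h1 : HasDerivAt (fun t : ℝ => a * t) a t := by
      simpa using (hasDerivAt_id t).const_mul a
    have h2 : HasDerivAt (fun t : ℝ => b / (2 * τ) * (t - t₀) ^ 2)
        (b / (2 * τ) * (2 * (t - t₀))) t := by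
      simpa using (((hasDerivAt_id t).sub_const t₀).pow 2).const_mul (b / (2 * τ))
    have h3 : HasDerivAt (fun t : ℝ => c / (3 * τ ^ 2) * (t - t₀) ^ 3)
        (c / (3 * τ ^ 2) * (3 * (t - t₀) ^ 2)) t := by
      simpa using (((hasDerivAt_id t).sub_const t₀).pow 3).const_mul (c / (3 * τ ^ 2))
    refine ((h1.add h2).add h3).congr_deriv ?_
    ring
  have hint : IntervalIntegrable
      (fun t => a + ((t - t₀) / τ) * b + ((t - t₀) / τ) ^ 2 * c)
      volume t₀ (t₀ + τ) := (by fun_prop : Continuous _).intervalIntegrable _ _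
  rw [intervalIntegral.integral_eq_sub_of_hasDerivAt h hint]
  field_simp
  ring

private lemma forall_dot_eq_zero {N : ℕ} (E : Fin N → ℝ) :
    (∀ η : Fin N → ℝ, ∑ i, E i * η i = 0) ↔ ∀ i, E i = 0 := by
  constructor
  · intro h i
    have := h (Pi.single i 1)
    simpa [Pi.single_apply, mul_ite] using this
  · intro h η; simp [h]

private lemma dot_symm {N : ℕ} (K : Matrix (Fin N) (Fin N) ℝ) (hK : K.IsSymm)
    (v w : Fin N → ℝ) : v ⬝ᵥ K.mulVec w = ∑ i, K.mulVec v i * w i := by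
  rw [Matrix.dotProduct_mulVec, ← Matrix.mulVec_transpose, hK]
  rfl

private lemma mulVec_ac {N : ℕ} (K : Matrix (Fin N) (Fin N) ℝ) (v w : Fin N → ℝ)
    (a b : ℝ) (i : Fin N) :
    K.mulVec (fun j => a * v j + b * w j) i = a * K.mulVec v i + b * K.mulVec w i := by
  simp only [Matrix.mulVec, dotProduct, Finset.mul_sum, ← Finset.sum_add_distrib]
  exact Finset.sum_congr rfl fun j _ => by ring

/-- Section 4 of the paper: for piecewise linear approximation in time (`q = 1`),
the variational time-step equations of the structure-preserving Galerkin scheme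
for the Westervelt system (tested with constant test functions) are equivalent to
the algebraic one-step scheme in terms of the midpoint values
`ψ̄ = (ψⁿ + ψⁿ⁺¹)/2`, `p̄ = (pⁿ + pⁿ⁺¹)/2`, featuring the correction term
`(β/6)(pᵢⁿ⁺¹ − pᵢⁿ)²`. -/
theorem variational_step_equiv_one_step_scheme (N : ℕ) (m : Fin N → ℝ)
    (hm : ∀ i, 0 < m i) (K : Matrix (Fin N) (Fin N) ℝ) (hK : K.IsSymm)
    (α β τ t₀ : ℝ) (hτ : 0 < τ) (ψn ψn1 pn pn1 : Fin N → ℝ) :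
    ((∀ η : Fin N → ℝ,
        (∫ t in t₀..(t₀ + τ),
          (∑ i, m i * (1 - 2 * β * (pn i + ((t - t₀) / τ) * (pn1 i - pn i)))
              * deriv (fun s => pn i + ((s - t₀) / τ) * (pn1 i - pn i)) t * η i)
            + α * ((fun i => deriv (fun s => ψn i + ((s - t₀) / τ) * (ψn1 i - ψn i)) t)
                ⬝ᵥ K.mulVec η)
            + ((fun i => ψn i + ((t - t₀) / τ) * (ψn1 i - ψn i)) ⬝ᵥ K.mulVec η)) = 0)
      ∧ (∀ q : Fin N → ℝ,
        (∫ t in t₀..(t₀ + τ),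
          ∑ i, m i * (1 - 2 * β * (pn i + ((t - t₀) / τ) * (pn1 i - pn i)))
            * (deriv (fun s => ψn i + ((s - t₀) / τ) * (ψn1 i - ψn i)) t
                - (pn i + ((t - t₀) / τ) * (pn1 i - pn i))) * q i) = 0))
    ↔ (∀ i,
        (m i * (1 - 2 * β * ((pn i + pn1 i) / 2)) * (pn1 i - pn i) / τ
            + α * (K.mulVec (ψn1 - ψn)) i / τ
            + (K.mulVec (fun j => (ψn j + ψn1 j) / 2)) i = 0)
        ∧ (1 - 2 * β * ((pn i + pn1 i) / 2)) * (ψn1 i - ψn i) / τ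
            = (1 - 2 * β * ((pn i + pn1 i) / 2)) * ((pn i + pn1 i) / 2)
              - (β / 6) * (pn1 i - pn i) ^ 2) := by
  have hτ' : τ ≠ 0 := ne_of_gt hτ
  have hd := deriv_affine t₀ τ hτ'
  set Ka : Fin N → ℝ := K.mulVec ψn with hKa
  set Kb : Fin N → ℝ := K.mulVec ψn1 with hKb
  -- scalar rewrites for matrix-vector products
  have ht1 : ∀ i, K.mulVec (ψn1 - ψn) i = Kb i - Ka i := by
    intro i
    rw [show (ψn1 - ψn) = (fun j => (1:ℝ) * ψn1 j + (-1) * ψn j) from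
      funext fun j => by show ψn1 j - ψn j = _; ring]
    rw [mulVec_ac]; ring
  have ht2 : ∀ i, K.mulVec (fun j => (ψn j + ψn1 j) / 2) i = (Ka i + Kb i) / 2 := by
    intro i
    rw [show (fun j => (ψn j + ψn1 j) / 2) = (fun j => (1/2 : ℝ) * ψn j + (1/2) * ψn1 j)
      from funext fun j => by ring]
    rw [mulVec_ac]; ring
  have he1 : ∀ i, K.mulVec (fun j => (ψn1 j - ψn j) / τ) i = (Kb i - Ka i) / τ := by
    intro i
    rw [show (fun j => (ψn1 j - ψn j) / τ) = (fun j => (1/τ) * ψn1 j + (-(1/τ)) * ψn j)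
      from funext fun j => by ring]
    rw [mulVec_ac]; ring
  have he2 : ∀ u : ℝ, ∀ i, K.mulVec (fun j => ψn j + u * (ψn1 j - ψn j)) i
      = Ka i + u * (Kb i - Ka i) := by
    intro u i
    rw [show (fun j => ψn j + u * (ψn1 j - ψn j)) = (fun j => (1 - u) * ψn j + u * ψn1 j)
      from funext fun j => by ring]
    rw [mulVec_ac]; ring
  set E₁ : Fin N → ℝ := fun i =>
    m i * (1 - 2 * β * ((pn i + pn1 i) / 2)) * (pn1 i - pn i)
      + α * (Kb i - Ka i) + τ * ((Ka i + Kb i) / 2) with hE₁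
  set E₂ : Fin N → ℝ := fun i =>
    τ * (m i * ((1 - 2 * β * ((pn i + pn1 i) / 2)) * ((ψn1 i - ψn i) / τ - (pn i + pn1 i) / 2)
      + (β / 6) * (pn1 i - pn i) ^ 2)) with hE₂
  have I1 : ∀ η : Fin N → ℝ,
      (∫ t in t₀..(t₀ + τ),
          (∑ i, m i * (1 - 2 * β * (pn i + ((t - t₀) / τ) * (pn1 i - pn i)))
              * deriv (fun s => pn i + ((s - t₀) / τ) * (pn1 i - pn i)) t * η i)
            + α * ((fun i => deriv (fun s => ψn i + ((s - t₀) / τ) * (ψn1 i - ψn i)) t)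
                ⬝ᵥ K.mulVec η)
            + ((fun i => ψn i + ((t - t₀) / τ) * (ψn1 i - ψn i)) ⬝ᵥ K.mulVec η))
        = ∑ i, E₁ i * η i := by
    intro η
    rw [intervalIntegral.integral_congr
      (g := fun t =>
        (∑ i, (m i * (1 - 2 * β * pn i) * ((pn1 i - pn i) / τ)
            + α * ((Kb i - Ka i) / τ) + Ka i) * η i)
        + ((t - t₀) / τ) * (∑ i, (m i * (-(2 * β) * (pn1 i - pn i)) * ((pn1 i - pn i) / τ)
            + (Kb i - Ka i)) * η i)
        + ((t - t₀) / τ) ^ 2 * 0)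
      (fun t _ => by
        simp only [hd]
        rw [dot_symm K hK, dot_symm K hK]
        simp only [he1, he2]
        simp only [Finset.mul_sum, mul_zero, add_zero, ← Finset.sum_add_distrib]
        exact Finset.sum_congr rfl fun i _ => by ring)]
    rw [integral_quad t₀ τ hτ']
    simp only [Finset.mul_sum, mul_zero, add_zero, ← Finset.sum_add_distrib]
    exact Finset.sum_congr rfl fun i _ => by field_simp; ring
  have I2 : ∀ q : Fin N → ℝ,
      (∫ t in t₀..(t₀ + τ),
          ∑ i, m i * (1 - 2 * β * (pn i + ((t - t₀) / τ) * (pn1 i - pn i)))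
            * (deriv (fun s => ψn i + ((s - t₀) / τ) * (ψn1 i - ψn i)) t
                - (pn i + ((t - t₀) / τ) * (pn1 i - pn i))) * q i)
        = ∑ i, E₂ i * q i := by
    intro q
    rw [intervalIntegral.integral_congr
      (g := fun t =>
        (∑ i, (m i * (1 - 2 * β * pn i) * ((ψn1 i - ψn i) / τ - pn i)) * q i)
        + ((t - t₀) / τ) * (∑ i, (m i * (-(2 * β) * (pn1 i - pn i)) * ((ψn1 i - ψn i) / τ - pn i)
            + m i * (1 - 2 * β * pn i) * (-(pn1 i - pn i))) * q i)
        + ((t - t₀) / τ) ^ 2 * (∑ i, (m i * (2 * β * (pn1 i - pn i) ^ 2)) * q i))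
      (fun t _ => by
        simp only [hd]
        simp only [Finset.mul_sum, ← Finset.sum_add_distrib]
        exact Finset.sum_congr rfl fun i _ => by ring)]
    rw [integral_quad t₀ τ hτ']
    simp only [hE₂, Finset.mul_sum, ← Finset.sum_add_distrib]
    refine Finset.sum_congr rfl fun i _ => ?_
    generalize (ψn1 i - ψn i) / τ = X
    ring
  have h1 : (∀ η : Fin N → ℝ,
      (∫ t in t₀..(t₀ + τ),
          (∑ i, m i * (1 - 2 * β * (pn i + ((t - t₀) / τ) * (pn1 i - pn i)))
              * deriv (fun s => pn i + ((s - t₀) / τ) * (pn1 i - pn i)) t * η i)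
            + α * ((fun i => deriv (fun s => ψn i + ((s - t₀) / τ) * (ψn1 i - ψn i)) t)
                ⬝ᵥ K.mulVec η)
            + ((fun i => ψn i + ((t - t₀) / τ) * (ψn1 i - ψn i)) ⬝ᵥ K.mulVec η)) = 0)
      ↔ ∀ i, E₁ i = 0 := by
    rw [← forall_dot_eq_zero E₁]
    exact forall_congr' fun η => by rw [I1 η]
  have h2 : (∀ q : Fin N → ℝ,
      (∫ t in t₀..(t₀ + τ),
          ∑ i, m i * (1 - 2 * β * (pn i + ((t - t₀) / τ) * (pn1 i - pn i)))
            * (deriv (fun s => ψn i + ((s - t₀) / τ) * (ψn1 i - ψn i)) t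
                - (pn i + ((t - t₀) / τ) * (pn1 i - pn i))) * q i) = 0)
      ↔ ∀ i, E₂ i = 0 := by
    rw [← forall_dot_eq_zero E₂]
    exact forall_congr' fun q => by rw [I2 q]
  rw [h1, h2, ← forall_and]
  refine forall_congr' fun i => and_congr ?_ ?_
  · rw [ht1, ht2]
    simp only [hE₁]
    have key : m i * (1 - 2 * β * ((pn i + pn1 i) / 2)) * (pn1 i - pn i) / τ
        + α * (Kb i - Ka i) / τ + (Ka i + Kb i) / 2
        = (m i * (1 - 2 * β * ((pn i + pn1 i) / 2)) * (pn1 i - pn i)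
          + α * (Kb i - Ka i) + τ * ((Ka i + Kb i) / 2)) / τ := by
      field_simp
    rw [key, div_eq_zero_iff]
    simp [hτ']
  · simp only [hE₂]
    rw [mul_eq_zero, mul_eq_zero]
    constructor
    · rintro (h | h | h)
      · exact absurd h hτ'
      · exact absurd h (ne_of_gt (hm i))
      · linear_combination h
    · intro h
      right; right
      linear_combination h
end

section
/- Let N be a natural number, m ∈ ℝᴺ, K a symmetric N×N real matrix, α, β real numbers, and τ > 0. Let ψⁿ, ψⁿ⁺¹, pⁿ, pⁿ⁺¹ ∈ ℝᴺ and write ψ̄ = (ψⁿ + ψⁿ⁺¹)/2, p̄ = (pⁿ + pⁿ⁺¹)/2. Assume that for every index i: (i) mᵢ (1 − 2β p̄ᵢ)(pᵢⁿ⁺¹ − pᵢⁿ)/τ + α (K(ψⁿ⁺¹ − ψⁿ))ᵢ/τ + (Kψ̄)ᵢ = 0, and (ii) (1 − 2β p̄ᵢ)(ψᵢⁿ⁺¹ − ψᵢⁿ)/τ = (1 − 2β p̄ᵢ) p̄ᵢ − (β/6)(pᵢⁿ⁺¹ − pᵢⁿ)². Then, with E_h(ψ,p) = ½ ψᵀKψ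 + Σᵢ mᵢ (½ − (2β/3) pᵢ) pᵢ², one has E_h(ψⁿ⁺¹, pⁿ⁺¹) − E_h(ψⁿ, pⁿ) = −(α/τ) (ψⁿ⁺¹ − ψⁿ)ᵀ K (ψⁿ⁺¹ − ψⁿ). -/
open Matrix

/-- One-step (`k = q = 1`) instance of Lemma 4 of the paper: along the mass-lumped
structure-preserving scheme, the discrete energy changes exactly by the numerical
viscous dissipation `−(α/τ)(ψⁿ⁺¹−ψⁿ)ᵀK(ψⁿ⁺¹−ψⁿ)`. -/
theorem one_step_discrete_energy_identity (N : ℕ) (m : Fin N → ℝ)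
    (K : Matrix (Fin N) (Fin N) ℝ) (hK : K.IsSymm) (α β τ : ℝ) (hτ : 0 < τ)
    (ψn ψn1 pn pn1 : Fin N → ℝ)
    (h1 : ∀ i, m i * (1 - 2 * β * ((pn i + pn1 i) / 2)) * (pn1 i - pn i) / τ
        + α * (K.mulVec (ψn1 - ψn)) i / τ
        + (K.mulVec (fun j => (ψn j + ψn1 j) / 2)) i = 0)
    (h2 : ∀ i, (1 - 2 * β * ((pn i + pn1 i) / 2)) * (ψn1 i - ψn i) / τ
        = (1 - 2 * β * ((pn i + pn1 i) / 2)) * ((pn i + pn1 i) / 2)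
          - (β / 6) * (pn1 i - pn i) ^ 2) :
    Eh m K β ψn1 pn1 - Eh m K β ψn pn
      = -(α / τ) * ((ψn1 - ψn) ⬝ᵥ K.mulVec (ψn1 - ψn)) := by
  have hτ' : τ ≠ 0 := ne_of_gt hτ
  set ψb : Fin N → ℝ := fun j => (ψn j + ψn1 j) / 2 with hψb
  -- symmetry of the bilinear form
  have hsym : ∀ u v : Fin N → ℝ, u ⬝ᵥ K.mulVec v = v ⬝ᵥ K.mulVec u := by
    intro u v
    rw [Matrix.dotProduct_mulVec, ← Matrix.mulVec_transpose, hK.eq, dotProduct_comm]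
  -- pointwise key identity
  have key : ∀ i, m i * ((1 / 2 - (2 * β / 3) * pn1 i) * (pn1 i) ^ 2)
      - m i * ((1 / 2 - (2 * β / 3) * pn i) * (pn i) ^ 2)
      = (ψn1 i - ψn i) * (-(α * (K.mulVec (ψn1 - ψn)) i / τ) - (K.mulVec ψb) i) := by
    intro i
    linear_combination (-(m i) * (pn1 i - pn i)) * h2 i + (ψn1 i - ψn i) * h1 i
  -- quadratic part
  have hq : (1 / 2) * (ψn1 ⬝ᵥ K.mulVec ψn1) - (1 / 2) * (ψn ⬝ᵥ K.mulVec ψn)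
      = (ψn1 - ψn) ⬝ᵥ K.mulVec ψb := by
    have havg : ψb = (2 : ℝ)⁻¹ • (ψn + ψn1) := by
      funext j; simp [hψb, Pi.smul_apply]; ring
    rw [havg, Matrix.mulVec_smul, Matrix.mulVec_add, sub_dotProduct,
      dotProduct_smul, dotProduct_smul, dotProduct_add,
      dotProduct_add]
    have hs := hsym ψn ψn1
    simp only [smul_eq_mul]
    linarith
  -- summing the key identity
  have hsum : ∑ i, ((ψn1 i - ψn i) * (-(α * (K.mulVec (ψn1 - ψn)) i / τ) - (K.mulVec ψb) i))
      = -(α / τ) * ((ψn1 - ψn) ⬝ᵥ K.mulVec (ψn1 - ψn)) - ((ψn1 - ψn) ⬝ᵥ K.mulVec ψb) := by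
    simp only [dotProduct, Pi.sub_apply, Finset.mul_sum, ← Finset.sum_sub_distrib]
    apply Finset.sum_congr rfl
    intro i _
    field_simp
  have hEdiff : Eh m K β ψn1 pn1 - Eh m K β ψn pn
      = ((1 / 2) * (ψn1 ⬝ᵥ K.mulVec ψn1) - (1 / 2) * (ψn ⬝ᵥ K.mulVec ψn))
        + ∑ i, (m i * ((1 / 2 - (2 * β / 3) * pn1 i) * (pn1 i) ^ 2)
          - m i * ((1 / 2 - (2 * β / 3) * pn i) * (pn i) ^ 2)) := by
    simp only [Eh, Finset.sum_sub_distrib]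
    ring
  rw [hEdiff, Finset.sum_congr rfl (fun i _ => key i), hsum, hq]
  ring
end

section
/- Let N be a natural number, m ∈ ℝᴺ, K a symmetric N×N real matrix, β a real number, and τ > 0. Let (ψⁿ)_{n≥0} and (pⁿ)_{n≥0} be sequences in ℝᴺ such that for every n ≥ 0, writing ψ̄ⁿ = (ψⁿ + ψⁿ⁺¹)/2 and p̄ⁿ = (pⁿ + pⁿ⁺¹)/2, the scheme with α = 0 holds componentwise: mᵢ (1 − 2β p̄ⁿᵢ)(pᵢⁿ⁺¹ − pᵢⁿ)/τ + (Kψ̄ⁿ)ᵢ = 0 and (1 − 2β p̄ⁿᵢ)(ψᵢⁿ⁺¹ − ψᵢⁿ)/τ = (1 − 2β p̄ⁿᵢ) p̄ⁿᵢ − (β/6)(pᵢⁿ⁺¹ − pᵢⁿ)² for all i. Then the discrete energy E_h(ψ,p) = ½ ψᵀKψ + Σᵢ mᵢ (½ − (2β/3) pᵢ) pᵢ² is conserved exactly: E_h(ψⁿ, pⁿ) = E_h(ψ⁰, p⁰) for all n ≥ 0. -/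
open Matrix

/-- Exact energy conservation of the nondissipative (`α = 0`) one-step mass-lumped
structure-preserving scheme for the Westervelt equation: the discrete energy is
constant along the whole discrete trajectory. -/
theorem one_step_scheme_energy_conservation (N : ℕ) (m : Fin N → ℝ)
    (K : Matrix (Fin N) (Fin N) ℝ) (hK : K.IsSymm) (β τ : ℝ) (hτ : 0 < τ)
    (ψ p : ℕ → Fin N → ℝ)
    (h1 : ∀ n : ℕ, ∀ i,
      m i * (1 - 2 * β * ((p n i + p (n + 1) i) / 2)) * (p (n + 1) i - p n i) / τ
        + (K.mulVec (fun j => (ψ n j + ψ (n + 1) j) / 2)) i = 0)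
    (h2 : ∀ n : ℕ, ∀ i,
      (1 - 2 * β * ((p n i + p (n + 1) i) / 2)) * (ψ (n + 1) i - ψ n i) / τ
        = (1 - 2 * β * ((p n i + p (n + 1) i) / 2)) * ((p n i + p (n + 1) i) / 2)
          - (β / 6) * (p (n + 1) i - p n i) ^ 2) :
    ∀ n : ℕ, Eh m K β (ψ n) (p n) = Eh m K β (ψ 0) (p 0) := by
  have hτ' : τ ≠ 0 := ne_of_gt hτ
  have hsymm : ∀ x y : Fin N → ℝ, x ⬝ᵥ K.mulVec y = y ⬝ᵥ K.mulVec x := by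
    intro x y
    rw [Matrix.dotProduct_mulVec, ← Matrix.mulVec_transpose, hK, dotProduct_comm]
  have key : ∀ n, Eh m K β (ψ (n + 1)) (p (n + 1)) = Eh m K β (ψ n) (p n) := by
    intro n
    set a := ψ n with ha
    set b := ψ (n + 1) with hb
    have hquad : (1 / 2) * (b ⬝ᵥ K.mulVec b) - (1 / 2) * (a ⬝ᵥ K.mulVec a)
        = ∑ i, (b i - a i) * (K.mulVec (fun j => (a j + b j) / 2)) i := by
      have hmid : (fun j => (a j + b j) / 2) = (2⁻¹ : ℝ) • (a + b) := by
        funext j; simp [Pi.smul_apply]; ring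
      rw [hmid]
      have hdp : ∑ i, (b i - a i) * (K.mulVec ((2⁻¹ : ℝ) • (a + b))) i
          = (b - a) ⬝ᵥ K.mulVec ((2⁻¹ : ℝ) • (a + b)) := by
        simp [dotProduct, Pi.sub_apply]
      rw [hdp, Matrix.mulVec_smul, Matrix.mulVec_add]
      simp only [dotProduct_smul, sub_dotProduct, dotProduct_add,
        smul_eq_mul]
      have hs := hsymm a b
      ring_nf
      linarith
    have hterm : ∀ i, (b i - a i) * (K.mulVec (fun j => (a j + b j) / 2)) i
        = m i * ((1 / 2 - (2 * β / 3) * p n i) * (p n i) ^ 2)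
          - m i * ((1 / 2 - (2 * β / 3) * p (n + 1) i) * (p (n + 1) i) ^ 2) := by
      intro i
      have e1 := h1 n i
      have e2 := h2 n i
      have hK1 : (K.mulVec (fun j => (a j + b j) / 2)) i
          = - (m i * (1 - 2 * β * ((p n i + p (n + 1) i) / 2)) * (p (n + 1) i - p n i) / τ) := by
        rw [ha, hb]; linarith
      rw [hK1]
      linear_combination (-(m i * (p (n + 1) i - p n i))) * e2
    have hsum : ∑ i, (b i - a i) * (K.mulVec (fun j => (a j + b j) / 2)) i
        = (∑ i, m i * ((1 / 2 - (2 * β / 3) * p n i) * (p n i) ^ 2))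
          - ∑ i, m i * ((1 / 2 - (2 * β / 3) * p (n + 1) i) * (p (n + 1) i) ^ 2) := by
      rw [← Finset.sum_sub_distrib]
      exact Finset.sum_congr rfl fun i _ => hterm i
    have hq := hquad
    rw [hsum] at hq
    unfold Eh
    linarith
  intro n
  induction n with
  | zero => rfl
  | succ n ih => rw [key n]; exact ih
end

section
/- Let N be a natural number, m ∈ ℝᴺ, K a symmetric positive semidefinite N×N real matrix, α ≥ 0 and β real numbers, and τ > 0. Let ψⁿ, ψⁿ⁺¹, pⁿ, pⁿ⁺¹ ∈ ℝᴺ and write ψ̄ = (ψⁿ + ψⁿ⁺¹)/2, p̄ = (pⁿ + pⁿ⁺¹)/2. Assume that for every index i: (i) mᵢ (1 − 2β p̄ᵢ)(pᵢⁿ⁺¹ − pᵢⁿ)/τ + α (K(ψⁿ⁺¹ − ψⁿ))ᵢ/τ + (Kψ̄)ᵢ = 0, and (ii) (1 − 2β p̄ᵢ)(ψᵢⁿ⁺¹ − ψᵢⁿ)/τ = (1 − 2β p̄ᵢ) p̄ᵢ − (β/6)(pᵢⁿ⁺¹ − pᵢⁿ)². Then, with E_h(ψ,p) = ½ ψᵀKψ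 + Σᵢ mᵢ (½ − (2β/3) pᵢ) pᵢ², one has E_h(ψⁿ⁺¹, pⁿ⁺¹) ≤ E_h(ψⁿ, pⁿ). -/
open Matrix

/-- Discrete passivity of the one-step mass-lumped structure-preserving scheme for
the Westervelt equation: with `K` symmetric positive semidefinite and `α ≥ 0`, the
discrete energy is nonincreasing from one time step to the next. -/
theorem one_step_scheme_passivity (N : ℕ) (m : Fin N → ℝ)
    (K : Matrix (Fin N) (Fin N) ℝ) (hK : K.PosSemidef) (α β τ : ℝ)
    (hα : 0 ≤ α) (hτ : 0 < τ) (ψn ψn1 pn pn1 : Fin N → ℝ)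
    (h1 : ∀ i, m i * (1 - 2 * β * ((pn i + pn1 i) / 2)) * (pn1 i - pn i) / τ
        + α * (K.mulVec (ψn1 - ψn)) i / τ
        + (K.mulVec (fun j => (ψn j + ψn1 j) / 2)) i = 0)
    (h2 : ∀ i, (1 - 2 * β * ((pn i + pn1 i) / 2)) * (ψn1 i - ψn i) / τ
        = (1 - 2 * β * ((pn i + pn1 i) / 2)) * ((pn i + pn1 i) / 2)
          - (β / 6) * (pn1 i - pn i) ^ 2) :
    Eh m K β ψn1 pn1 ≤ Eh m K β ψn pn := by
  set ψb : Fin N → ℝ := fun j => (ψn j + ψn1 j) / 2 with hψb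
  have hKs : Kᵀ = K := (by simpa using hK.isHermitian : K.IsSymm)
  have hsymm : ∀ v w : Fin N → ℝ, v ⬝ᵥ K.mulVec w = w ⬝ᵥ K.mulVec v := by
    intro v w
    have hv : v ᵥ* K = K *ᵥ v := by
      have := Matrix.vecMul_transpose (A := K) (x := v)
      rwa [hKs] at this
    rw [dotProduct_mulVec, hv, dotProduct_comm]
  -- quadratic part
  have hquad : (1/2) * (ψn1 ⬝ᵥ K.mulVec ψn1) - (1/2) * (ψn ⬝ᵥ K.mulVec ψn)
      = (ψn1 - ψn) ⬝ᵥ K.mulVec ψb := by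
    have hψb2 : ψb = (2:ℝ)⁻¹ • (ψn + ψn1) := by
      funext j; simp [hψb]; ring
    rw [hψb2, Matrix.mulVec_smul, Matrix.mulVec_add, sub_dotProduct,
      dotProduct_smul, dotProduct_smul, dotProduct_add, dotProduct_add]
    have := hsymm ψn ψn1
    simp only [smul_eq_mul]
    linarith
  -- nonlinear part
  have hnl : (∑ i, m i * ((1/2 - (2*β/3) * pn1 i) * (pn1 i) ^ 2))
      - (∑ i, m i * ((1/2 - (2*β/3) * pn i) * (pn i) ^ 2))
      = ∑ i, (ψn1 i - ψn i) *
          (-(α * (K.mulVec (ψn1 - ψn)) i / τ) - (K.mulVec ψb) i) := by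
    rw [← Finset.sum_sub_distrib]
    apply Finset.sum_congr rfl
    intro i _
    have e1 := h1 i
    have e2 := h2 i
    have step1 : m i * ((1/2 - (2*β/3) * pn1 i) * (pn1 i) ^ 2)
        - m i * ((1/2 - (2*β/3) * pn i) * (pn i) ^ 2)
        = m i * (pn1 i - pn i) *
          ((1 - 2 * β * ((pn i + pn1 i) / 2)) * ((pn i + pn1 i) / 2)
            - (β / 6) * (pn1 i - pn i) ^ 2) := by ring
    rw [step1, ← e2]
    have e1' : m i * (1 - 2 * β * ((pn i + pn1 i) / 2)) * (pn1 i - pn i) / τ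
        = -(α * (K.mulVec (ψn1 - ψn)) i / τ) - (K.mulVec ψb) i := by
      have := h1 i
      linarith
    have : m i * (pn1 i - pn i) * ((1 - 2 * β * ((pn i + pn1 i) / 2)) * (ψn1 i - ψn i) / τ)
        = (ψn1 i - ψn i) * (m i * (1 - 2 * β * ((pn i + pn1 i) / 2)) * (pn1 i - pn i) / τ) := by
      ring
    rw [this, e1']
  -- rewrite the RHS sum as dot products
  have hsum : ∑ i, (ψn1 i - ψn i) *
      (-(α * (K.mulVec (ψn1 - ψn)) i / τ) - (K.mulVec ψb) i)
      = -(α/τ) * ((ψn1 - ψn) ⬝ᵥ K.mulVec (ψn1 - ψn)) - (ψn1 - ψn) ⬝ᵥ K.mulVec ψb := by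
    simp only [dotProduct, Finset.mul_sum, ← Finset.sum_sub_distrib, Pi.sub_apply]
    apply Finset.sum_congr rfl
    intro i _
    ring
  have hpos : 0 ≤ (ψn1 - ψn) ⬝ᵥ K.mulVec (ψn1 - ψn) := by
    have := hK.dotProduct_mulVec_nonneg (ψn1 - ψn)
    simpa using this
  have hα' : 0 ≤ α / τ := div_nonneg hα hτ.le
  have hEh : Eh m K β ψn1 pn1 - Eh m K β ψn pn
      = ((1/2) * (ψn1 ⬝ᵥ K.mulVec ψn1) - (1/2) * (ψn ⬝ᵥ K.mulVec ψn))
        + ((∑ i, m i * ((1/2 - (2*β/3) * pn1 i) * (pn1 i) ^ 2))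
          - (∑ i, m i * ((1/2 - (2*β/3) * pn i) * (pn i) ^ 2))) := by
    unfold Eh; ring
  rw [hquad, hnl, hsum] at hEh
  have h0 : -(α/τ) * ((ψn1 - ψn) ⬝ᵥ K.mulVec (ψn1 - ψn)) ≤ 0 := by
    nlinarith [mul_nonneg hα' hpos]
  linarith
end
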